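/- A branchwise-real tree order admits a continuous grading if and only if it admits a strictly monotonic map into ℝ. -/

import Mathlib

/-- A partial order is rooted if it has a minimum element. -/
def IsRooted (X : Type*) [PartialOrder X] : Prop := ∃ r : X, ∀ x, r ≤ x

/-- The set of predecessors of every element is linearly ordered. -/
def DownLinear (X : Type*) [PartialOrder X] : Prop :=
  ∀ x y z : X, y ≤ x → z ≤ x → y ≤ z ∨ z ≤ y

/-- A well-stratified tree: a rooted partial order in which the set of
predecessors of every element is well-ordered. -/
def IsWSTree (T : Type*) [PartialOrder T] : Prop :=
  IsRooted T ∧ DownLinear T ∧ ∀ x : T, (Set.Iio x).IsWF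

/-- A branchwise-real tree order: a rooted partial order with linearly
ordered predecessor sets, in which every branch (maximal chain) is
order-isomorphic to a real interval, and any two elements have a meet. -/
def IsBRTO (X : Type*) [PartialOrder X] : Prop :=
  IsRooted X ∧ DownLinear X ∧
  (∀ B : Set X, IsMaxChain (· ≤ ·) B →
      ∃ I : Set ℝ, I.OrdConnected ∧ Nonempty (B ≃o I)) ∧
  (∀ x y : X, ∃ m : X, IsGLB {x, y} m)

/-- A continuous grading: a strictly monotonic real-valued map restricting
to an order isomorphism `[x,y] → [ℓ x, ℓ y]` for all `x < y` (these intervals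
are chains, so a strictly monotonic bijection between them is an order
isomorphism). -/
def IsContinuousGrading {X : Type*} [PartialOrder X] (ℓ : X → ℝ) : Prop :=
  StrictMono ℓ ∧ ∀ x y : X, x < y →
    Set.BijOn ℓ (Set.Icc x y) (Set.Icc (ℓ x) (ℓ y))


open Set

section Helpers
variable {X : Type*} [PartialOrder X]

private lemma iic_chain (hdl : DownLinear X) (x : X) : IsChain (· ≤ ·) (Set.Iic x) :=
  fun a ha b hb _ => hdl x a b ha hb

private lemma iic_subset_maxChain (hdl : DownLinear X) {B : Set X} (hB : IsMaxChain (· ≤ ·) B)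
    {x : X} (hxB : x ∈ B) : Set.Iic x ⊆ B := by
  have hch : IsChain (· ≤ ·) (B ∪ Set.Iic x) := by
    intro a ha b hb hne
    rcases ha with ha | ha <;> rcases hb with hb | hb
    · exact hB.1 ha hb hne
    · rcases hB.1.total ha hxB with h | h
      · exact hdl x a b h hb
      · exact Or.inr (hb.trans h)
    · rcases hB.1.total hb hxB with h | h
      · exact hdl x a b ha h
      · exact Or.inl (ha.trans h)
    · exact hdl x a b ha hb
  have := hB.2 hch Set.subset_union_left
  rw [this]
  exact Set.subset_union_right
private lemma brto_dense (hX : IsBRTO X) {u v : X} (huv : u < v) : ∃ c : X, u < c ∧ c < v := by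
  obtain ⟨B, hB, hsub⟩ := (iic_chain hX.2.1 v).exists_maxChain
  obtain ⟨I, hIoc, ⟨e⟩⟩ := hX.2.2.1 B hB
  have hvB : v ∈ B := hsub (le_refl v)
  have huB : u ∈ B := hsub huv.le
  set uu : B := ⟨u, huB⟩
  set vv : B := ⟨v, hvB⟩
  have hlt : e uu < e vv := by
    rw [e.lt_iff_lt]
    exact Subtype.mk_lt_mk.2 huv
  have hltR : (e uu : ℝ) < (e vv : ℝ) := hlt
  set m : ℝ := ((e uu : ℝ) + (e vv : ℝ)) / 2 with hm
  have hm1 : (e uu : ℝ) < m := by simp only [hm]; linarith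
  have hm2 : m < (e vv : ℝ) := by simp only [hm]; linarith
  have hmI : m ∈ I := hIoc.out (e uu).2 (e vv).2 ⟨hm1.le, hm2.le⟩
  refine ⟨(e.symm ⟨m, hmI⟩ : B), ?_, ?_⟩
  · have : uu < e.symm ⟨m, hmI⟩ := by
      rw [← e.symm_apply_apply uu, e.symm.lt_iff_lt]
      exact Subtype.mk_lt_mk.2 hm1
    exact this
  · have : e.symm ⟨m, hmI⟩ < vv := by
      rw [← e.symm_apply_apply vv, e.symm.lt_iff_lt]
      exact Subtype.mk_lt_mk.2 hm2
    exact this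
private lemma psi_props (g : ℝ → ℝ) (hmono : Monotone g)
    (hpos : ∀ s : ℝ, 0 < s → 0 < g s) (h0 : ∀ s : ℝ, 0 ≤ g s) (h1 : ∀ s : ℝ, g s ≤ 1) :
    ∃ ψ : ℝ → ℝ, Continuous ψ ∧ ψ 0 = 0 ∧ StrictMonoOn ψ (Set.Ici 0) ∧
      (∀ t : ℝ, 0 ≤ t → t ≤ 1 → ψ t ≤ g t) := by
  have hint : ∀ a b : ℝ, IntervalIntegrable g MeasureTheory.volume a b := fun a b =>
    hmono.intervalIntegrable
  refine ⟨fun t => ∫ s in (0:ℝ)..t, g s, ?_, ?_, ?_, ?_⟩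
  · exact intervalIntegral.continuous_primitive hint 0
  · simp
  · intro a ha b hb hab
    have key : ∀ c d : ℝ, c ≤ d → (∫ s in c..d, g s) ≥ (d - c) * g c := by
      intro c d hcd
      have := intervalIntegral.integral_mono_on hcd
        (intervalIntegrable_const (c := g c)) (hint c d)
        (fun s hs => hmono hs.1)
      simpa using this
    have hnn : ∀ c d : ℝ, c ≤ d → 0 ≤ ∫ s in c..d, g s := by
      intro c d hcd
      have := key c d hcd
      nlinarith [h0 c]
    set m := (a + b) / 2 with hmdef
    have ham : a ≤ m := by simp only [hmdef]; linarith
    have hmb : m ≤ b := by simp only [hmdef]; linarith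
    have hmpos : 0 < m := by
      simp only [hmdef]
      rcases lt_or_eq_of_le (Set.mem_Ici.1 ha) with h | h
      · linarith
      · rw [← h] at hab ⊢; linarith
    have hsplit : (∫ s in (0:ℝ)..b, g s) = (∫ s in (0:ℝ)..a, g s) + ∫ s in a..b, g s :=
      (intervalIntegral.integral_add_adjacent_intervals (hint 0 a) (hint a b)).symm
    have hsplit2 : (∫ s in a..b, g s) = (∫ s in a..m, g s) + ∫ s in m..b, g s :=
      (intervalIntegral.integral_add_adjacent_intervals (hint a m) (hint m b)).symm
    have h3 : (∫ s in m..b, g s) ≥ (b - m) * g m := key m b hmb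
    have h4 : 0 < (b - m) * g m := by
      have : m < b := by simp only [hmdef]; linarith
      exact mul_pos (by linarith) (hpos m hmpos)
    have h5 : 0 ≤ ∫ s in a..m, g s := hnn a m ham
    show (∫ s in (0:ℝ)..a, g s) < ∫ s in (0:ℝ)..b, g s
    rw [hsplit, hsplit2]
    linarith
  · intro t ht ht1
    have : (∫ s in (0:ℝ)..t, g s) ≤ (t - 0) * g t := by
      have := intervalIntegral.integral_mono_on ht (hint 0 t)
        (intervalIntegrable_const (c := g t)) (fun s hs => hmono hs.2)
      simpa using this
    nlinarith [h0 t]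
end Helpers

structure PartialGrading (X : Type*) [PartialOrder X] (f : X → ℝ) (r : X) where
  dom : Set X
  l : X → ℝ
  root_mem : r ∈ dom
  dc : ∀ ⦃y v : X⦄, y ∈ dom → v ≤ y → v ∈ dom
  mono : ∀ ⦃a b : X⦄, a ∈ dom → b ∈ dom → a < b → l a < l b
  surj : ∀ ⦃a b : X⦄, a ∈ dom → b ∈ dom → a ≤ b →
    ∀ c : ℝ, l a ≤ c → c ≤ l b → ∃ u : X, a ≤ u ∧ u ≤ b ∧ l u = c
  bdd : ∀ ⦃y : X⦄, y ∈ dom → ∀ ⦃w : X⦄, y < w → l y < f w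

instance {X : Type*} [PartialOrder X] {f : X → ℝ} {r : X} :
    Preorder (PartialGrading X f r) where
  le p q := p.dom ⊆ q.dom ∧ Set.EqOn p.l q.l p.dom
  le_refl p := ⟨subset_rfl, fun _ _ => rfl⟩
  le_trans p q s h1 h2 := ⟨h1.1.trans h2.1, fun u hu => (h1.2 hu).trans (h2.2 (h1.1 hu))⟩

section Zorn
variable {X : Type*} [PartialOrder X] {f : X → ℝ} {r : X}

private lemma pg_chain_bdd (hr : ∀ y : X, r ≤ y) (hf : StrictMono f)
    (c : Set (PartialGrading X f r)) (hc : IsChain (· ≤ ·) c) : BddAbove c := by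
  classical
  rcases c.eq_empty_or_nonempty with rfl | ⟨p₁, hp₁⟩
  · refine ⟨⟨{r}, fun _ => f r - 1, rfl, ?_, ?_, ?_, ?_⟩, fun p hp => absurd hp (Set.notMem_empty p)⟩
    · intro y v hy hv
      rcases hy with rfl
      exact Set.mem_singleton_iff.2 (le_antisymm hv (hr v))
    · intro a b ha hb hab
      rcases ha with rfl; rcases hb with rfl; exact absurd hab (lt_irrefl _)
    · intro a b ha hb _ k h1 h2
      have ha' : a = r := ha
      have hb' : b = r := hb
      exact ⟨a, le_rfl, by rw [ha', hb'], le_antisymm h1 h2⟩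
    · intro y hy w hw
      have : f r ≤ f w := hf.monotone ((hr y).trans hw.le)
      show f r - 1 < f w
      linarith
  · set D : Set X := ⋃ p ∈ c, p.dom with hD
    set L : X → ℝ := fun u =>
      if h : ∃ p : PartialGrading X f r, p ∈ c ∧ u ∈ p.dom then h.choose.l u else 0 with hL
    have memD : ∀ {u : X}, u ∈ D ↔ ∃ p : PartialGrading X f r, p ∈ c ∧ u ∈ p.dom := by
      intro u; simp [hD]
    have agree : ∀ p ∈ c, ∀ q ∈ c, ∀ u : X, u ∈ p.dom → u ∈ q.dom → p.l u = q.l u := by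
      intro p hp q hq u hup huq
      rcases eq_or_ne p q with rfl | hne
      · rfl
      rcases hc hp hq hne with h | h
      · exact h.2 hup
      · exact (h.2 huq).symm
    have key : ∀ p ∈ c, ∀ u ∈ p.dom, L u = p.l u := by
      intro p hp u hu
      have h : ∃ q : PartialGrading X f r, q ∈ c ∧ u ∈ q.dom := ⟨p, hp, hu⟩
      simp only [hL, dif_pos h]
      exact agree h.choose h.choose_spec.1 p hp u h.choose_spec.2 hu
    have common : ∀ {a b : X} {p q : PartialGrading X f r}, p ∈ c → q ∈ c →
        a ∈ p.dom → b ∈ q.dom →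
        ∃ s : PartialGrading X f r, s ∈ c ∧ a ∈ s.dom ∧ b ∈ s.dom := by
      intro a b p q hp hq ha hb
      rcases eq_or_ne p q with rfl | hne
      · exact ⟨p, hp, ha, hb⟩
      rcases hc hp hq hne with h | h
      · exact ⟨q, hq, h.1 ha, hb⟩
      · exact ⟨p, hp, ha, h.1 hb⟩
    refine ⟨⟨D, L, memD.2 ⟨p₁, hp₁, p₁.root_mem⟩, ?_, ?_, ?_, ?_⟩, ?_⟩
    · intro y v hy hv
      obtain ⟨p, hp, hyp⟩ := memD.1 hy
      exact memD.2 ⟨p, hp, p.dc hyp hv⟩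
    · intro a b ha hb hab
      obtain ⟨p, hp, hap⟩ := memD.1 ha
      obtain ⟨q, hq, hbq⟩ := memD.1 hb
      obtain ⟨s, hs, has, hbs⟩ := common hp hq hap hbq
      rw [key s hs a has, key s hs b hbs]
      exact s.mono has hbs hab
    · intro a b ha hb hab k h1 h2
      obtain ⟨p, hp, hap⟩ := memD.1 ha
      obtain ⟨q, hq, hbq⟩ := memD.1 hb
      obtain ⟨s, hs, has, hbs⟩ := common hp hq hap hbq
      rw [key s hs a has] at h1
      rw [key s hs b hbs] at h2
      obtain ⟨u, hu1, hu2, hu3⟩ := s.surj has hbs hab k h1 h2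
      exact ⟨u, hu1, hu2, by rw [key s hs u (s.dc hbs hu2)]; exact hu3⟩
    · intro y hy w hw
      obtain ⟨p, hp, hyp⟩ := memD.1 hy
      rw [key p hp y hyp]
      exact p.bdd hyp hw
    · intro p hp
      exact ⟨fun u hu => memD.2 ⟨p, hp, hu⟩, fun u hu => (key p hp u hu).symm⟩

end Zorn
section Extend
variable {X : Type*} [PartialOrder X]

private lemma extend_grading (hX : IsBRTO X) {f : X → ℝ} (hf : StrictMono f)
    {r : X} (hr : ∀ y : X, r ≤ y) (p : PartialGrading X f r)
    {x : X} (hx : x ∉ p.dom) :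
    ∃ q : PartialGrading X f r, p ≤ q ∧ ¬ q.dom ⊆ p.dom := by
  classical
  have hdl : DownLinear X := hX.2.1
  obtain ⟨B, hB, hsub⟩ := (iic_chain hdl x).exists_maxChain
  obtain ⟨I, hIoc, ⟨e⟩⟩ := hX.2.2.1 B hB
  have hxB : x ∈ B := hsub le_rfl
  have hrB : r ∈ B := hsub (hr x)
  set xh : B := ⟨x, hxB⟩ with hxh
  set AR : Set ℝ := {t : ℝ | ∃ b : B, (b : X) ∈ p.dom ∧ (b : X) ≤ x ∧ (e b : ℝ) = t} with hAR
  have hAne : AR.Nonempty := ⟨e ⟨r, hrB⟩, ⟨r, hrB⟩, p.root_mem, hr x, rfl⟩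
  have hup : ∀ t ∈ AR, t ≤ (e xh : ℝ) := by
    rintro t ⟨b, hbd, hbx, rfl⟩
    exact Subtype.coe_le_coe.2 (e.le_iff_le.2 (show b ≤ xh from Subtype.coe_le_coe.1 hbx))
  have hAbdd : BddAbove AR := ⟨(e xh : ℝ), hup⟩
  set ζ : ℝ := sSup AR with hζ
  have hζI : ζ ∈ I := hIoc.out (e ⟨r, hrB⟩).2 (e xh).2
    ⟨le_csSup hAbdd ⟨⟨r, hrB⟩, p.root_mem, hr x, rfl⟩, csSup_le hAne hup⟩
  set zB : B := e.symm ⟨ζ, hζI⟩ with hzB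
  set z : X := (zB : X) with hzdef
  have hez : e zB = ⟨ζ, hζI⟩ := e.apply_symm_apply _
  have hzx : z ≤ x := by
    have h2 : e zB ≤ e xh := by rw [hez]; exact Subtype.mk_le_mk.2 (csSup_le hAne hup)
    exact Subtype.coe_le_coe.2 (e.le_iff_le.1 h2)
  have hub : ∀ v : X, v ∈ p.dom → v ≤ x → v ≤ z := by
    intro v hvd hvx
    have hvB : v ∈ B := hsub hvx
    have h1 : (e ⟨v, hvB⟩ : ℝ) ≤ ζ := le_csSup hAbdd ⟨⟨v, hvB⟩, hvd, hvx, rfl⟩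
    have h2 : e ⟨v, hvB⟩ ≤ e zB := by rw [hez]; exact Subtype.mk_le_mk.2 h1
    exact Subtype.coe_le_coe.2 (e.le_iff_le.1 h2)
  have hlb : ∀ v : X, v ≤ x → v ∉ p.dom → z ≤ v := by
    intro v hvx hvd
    have hvB : v ∈ B := hsub hvx
    have hbound : ∀ t ∈ AR, t ≤ (e ⟨v, hvB⟩ : ℝ) := by
      rintro t ⟨b, hbd, hbx, rfl⟩
      rcases hB.1.total b.2 hvB with h | h
      · exact Subtype.coe_le_coe.2 (e.le_iff_le.2 (show b ≤ ⟨v, hvB⟩ from h))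
      · exact absurd (p.dc hbd h) hvd
    have h2 : e zB ≤ e ⟨v, hvB⟩ := by rw [hez]; exact Subtype.mk_le_mk.2 (csSup_le hAne hbound)
    exact Subtype.coe_le_coe.2 (e.le_iff_le.1 h2)
  by_cases hz : z ∈ p.dom
  · -- Case A : z ∈ p.dom, glue the interval (z, x]
    have hzx' : z < x := lt_of_le_of_ne hzx (fun h => hx (h ▸ hz))
    set ξ : ℝ := (e xh : ℝ) with hξdef
    have hζξ : ζ < ξ := by
      have h1 : zB < xh := Subtype.coe_lt_coe.1 hzx'
      have h2 := e.lt_iff_lt.2 h1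
      rw [hez] at h2
      exact h2
    set Δ : ℝ := ξ - ζ with hΔdef
    have hΔ : 0 < Δ := sub_pos.2 hζξ
    set τ : X → ℝ := fun u => if hu : u ≤ x then ((e ⟨u, hsub hu⟩ : ℝ) - ζ) / Δ else 0 with hτdef
    set P : ℝ → X := fun t =>
      if h : ζ + t * Δ ∈ I then ((e.symm ⟨ζ + t * Δ, h⟩ : B) : X) else z with hPdef
    have hmemI : ∀ t : ℝ, 0 ≤ t → t ≤ 1 → ζ + t * Δ ∈ I := by
      intro t h0 h1
      refine hIoc.out hζI (e xh).2 ⟨by nlinarith, ?_⟩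
      show ζ + t * Δ ≤ ξ
      rw [hΔdef]; nlinarith
    have hPmem : ∀ t : ℝ, 0 < t → t ≤ 1 → P t ∈ Set.Ioc z x := by
      intro t h0 h1
      have hm := hmemI t h0.le h1
      rw [hPdef]
      simp only [dif_pos hm]
      constructor
      · have hlt' : (⟨ζ, hζI⟩ : I) < ⟨ζ + t * Δ, hm⟩ := Subtype.mk_lt_mk.2 (by nlinarith)
        exact Subtype.coe_lt_coe.2 (e.symm.lt_iff_lt.2 hlt')
      · have hle' : (⟨ζ + t * Δ, hm⟩ : I) ≤ e xh := Subtype.mk_le_mk.2 (by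
          show ζ + t * Δ ≤ ξ
          rw [hΔdef]; nlinarith)
        have := e.symm.le_iff_le.2 hle'
        rw [e.symm_apply_apply] at this
        exact Subtype.coe_le_coe.2 this
    have hτval : ∀ (u : X) (hu : u ≤ x), τ u = ((e ⟨u, hsub hu⟩ : ℝ) - ζ) / Δ := by
      intro u hu; rw [hτdef]; simp only [dif_pos hu]
    have heu : ∀ (u : X) (hu : u ≤ x), z < u → ζ < (e ⟨u, hsub hu⟩ : ℝ) := by
      intro u hu hzu
      have h1 : zB < ⟨u, hsub hu⟩ := Subtype.coe_lt_coe.1 hzu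
      have h2 := e.lt_iff_lt.2 h1
      rw [hez] at h2
      exact h2
    have heu2 : ∀ (u : X) (hu : u ≤ x), (e ⟨u, hsub hu⟩ : ℝ) ≤ ξ := by
      intro u hu
      exact Subtype.coe_le_coe.2 (e.le_iff_le.2 (show (⟨u, hsub hu⟩ : B) ≤ xh from hu))
    have hτmem : ∀ u : X, z < u → ∀ hu : u ≤ x, 0 < τ u ∧ τ u ≤ 1 := by
      intro u hzu hu
      rw [hτval u hu]
      constructor
      · exact div_pos (sub_pos.2 (heu u hu hzu)) hΔ
      · rw [div_le_one hΔ, hΔdef]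
        have := heu2 u hu
        linarith
    have hPτ : ∀ u : X, z < u → ∀ hu : u ≤ x, P (τ u) = u := by
      intro u hzu hu
      have hval : ζ + τ u * Δ = (e ⟨u, hsub hu⟩ : ℝ) := by
        rw [hτval u hu]; field_simp; ring
      have hmem : ζ + τ u * Δ ∈ I := by rw [hval]; exact (e ⟨u, hsub hu⟩).2
      rw [hPdef]
      simp only [dif_pos hmem]
      have : (⟨ζ + τ u * Δ, hmem⟩ : I) = e ⟨u, hsub hu⟩ := Subtype.ext hval
      rw [this, e.symm_apply_apply]
    have hτP : ∀ t : ℝ, 0 < t → t ≤ 1 → τ (P t) = t := by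
      intro t h0 h1
      have hPt := hPmem t h0 h1
      have hPx : P t ≤ x := hPt.2
      rw [hτval (P t) hPx]
      have hm := hmemI t h0.le h1
      have hcoe : P t = ((e.symm ⟨ζ + t * Δ, hm⟩ : B) : X) := by
        rw [hPdef]; simp only [dif_pos hm]
      have hBeq : (⟨P t, hsub hPx⟩ : B) = e.symm ⟨ζ + t * Δ, hm⟩ := Subtype.ext hcoe
      rw [hBeq, e.apply_symm_apply]
      field_simp
      ring
    have hPmono : ∀ s t : ℝ, 0 ≤ s → s ≤ t → t ≤ 1 → P s ≤ P t := by
      intro s t h0 hst h1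
      have hms := hmemI s h0 (hst.trans h1)
      have hmt := hmemI t (h0.trans hst) h1
      rw [hPdef]
      simp only [dif_pos hms, dif_pos hmt]
      have : (⟨ζ + s * Δ, hms⟩ : I) ≤ ⟨ζ + t * Δ, hmt⟩ := Subtype.mk_le_mk.2 (by nlinarith)
      exact Subtype.coe_le_coe.2 (e.symm.le_iff_le.2 this)
    -- the control function g
    set S : ℝ → ℝ := fun t => sSup (f '' Set.Ioo z (P t)) - p.l z with hSdef
    have hSbddset : ∀ t : ℝ, 0 < t → t ≤ 1 → ∀ v ∈ f '' Set.Ioo z (P t), v ≤ f x := by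
      rintro t h0 h1 v ⟨w, hw, rfl⟩
      exact (hf.monotone (hw.2.le.trans (hPmem t h0 h1).2))
    have hSne : ∀ t : ℝ, 0 < t → t ≤ 1 → (f '' Set.Ioo z (P t)).Nonempty := by
      intro t h0 h1
      obtain ⟨cc, hc1, hc2⟩ := brto_dense hX (hPmem t h0 h1).1
      exact ⟨f cc, cc, ⟨hc1, hc2⟩, rfl⟩
    have hSpos : ∀ t : ℝ, 0 < t → t ≤ 1 → 0 < S t := by
      intro t h0 h1
      obtain ⟨cc, hc1, hc2⟩ := brto_dense hX (hPmem t h0 h1).1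
      have h3 : p.l z < f cc := p.bdd hz hc1
      have h4 : f cc ≤ sSup (f '' Set.Ioo z (P t)) :=
        le_csSup ⟨f x, hSbddset t h0 h1⟩ ⟨cc, ⟨hc1, hc2⟩, rfl⟩
      rw [hSdef]
      simp only []
      linarith
    have hSmono : ∀ s t : ℝ, 0 < s → s ≤ t → t ≤ 1 → S s ≤ S t := by
      intro s t h0 hst h1
      rw [hSdef]
      simp only []
      have hPle : P s ≤ P t := hPmono s t h0.le hst h1
      have : f '' Set.Ioo z (P s) ⊆ f '' Set.Ioo z (P t) := by
        rintro v ⟨w, hw, rfl⟩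
        exact ⟨w, ⟨hw.1, lt_of_lt_of_le hw.2 hPle⟩, rfl⟩
      have := csSup_le_csSup ⟨f x, hSbddset t (h0.trans_le hst) h1⟩ (hSne s h0 (hst.trans h1)) this
      linarith
    set g : ℝ → ℝ := fun s => if s ≤ 0 then 0 else min 1 (S (min 1 s)) with hgdef
    have hgval : ∀ s : ℝ, 0 < s → g s = min 1 (S (min 1 s)) := by
      intro s h0; rw [hgdef]; simp only [if_neg (not_le.2 h0)]
    have hg0 : ∀ s : ℝ, 0 ≤ g s := by
      intro s
      rcases le_or_gt s 0 with h | h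
      · rw [hgdef]; simp only [if_pos h]; exact le_rfl
      · rw [hgval s h]
        have h1 : 0 < min 1 s := lt_min one_pos h
        exact (lt_min one_pos (hSpos _ h1 (min_le_left _ _))).le
    have hgpos : ∀ s : ℝ, 0 < s → 0 < g s := by
      intro s h
      rw [hgval s h]
      exact lt_min one_pos (hSpos _ (lt_min one_pos h) (min_le_left _ _))
    have hg1 : ∀ s : ℝ, g s ≤ 1 := by
      intro s
      rcases le_or_gt s 0 with h | h
      · rw [hgdef]; simp only [if_pos h]; norm_num
      · rw [hgval s h]; exact min_le_left _ _
    have hgmono : Monotone g := by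
      intro s t hst
      rcases le_or_gt s 0 with h | h
      · rw [hgdef]; simp only [if_pos h]; exact hg0 t
      · rw [hgval s h, hgval t (h.trans_le hst)]
        have h1 : 0 < min 1 s := lt_min one_pos h
        exact min_le_min le_rfl (hSmono _ _ h1 (min_le_min le_rfl hst) (min_le_left _ _))
    have hgbound : ∀ u : X, z < u → ∀ hu : u ≤ x, g (τ u) ≤ sSup (f '' Set.Ioo z u) - p.l z := by
      intro u hzu hu
      obtain ⟨ht0, ht1⟩ := hτmem u hzu hu
      have hPe : P (τ u) = u := hPτ u hzu hu
      have hSeq : S (τ u) = sSup (f '' Set.Ioo z u) - p.l z := by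
        rw [hSdef]; simp only []; rw [hPe]
      rw [hgval _ ht0, min_eq_right ht1, hSeq]
      exact min_le_right _ _
    obtain ⟨ψ, hψc, hψ0, hψmono, hψle⟩ := psi_props g hgmono hgpos hg0 hg1
    have hψpos : ∀ t : ℝ, 0 < t → 0 < ψ t := by
      intro t ht
      have := hψmono (Set.mem_Ici.2 le_rfl) (Set.mem_Ici.2 ht.le) ht
      rwa [hψ0] at this
    set J : Set X := Set.Ioc z x with hJdef
    set l' : X → ℝ := fun u => if u ∈ J then p.l z + ψ (τ u) else p.l u with hl'def
    have d1 : ∀ u ∈ J, u ∉ p.dom := by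
      intro u hu hud
      exact absurd (hub u hud hu.2) (not_le_of_gt hu.1)
    have lJ : ∀ u ∈ J, l' u = p.l z + ψ (τ u) := by
      intro u hu; rw [hl'def]; simp only [if_pos hu]
    have ldom : ∀ u ∈ p.dom, l' u = p.l u := by
      intro u hu; rw [hl'def]; simp only [if_neg (fun h => d1 u h hu)]
    have lJgt : ∀ u ∈ J, p.l z < l' u := by
      intro u hu
      rw [lJ u hu]
      have := hψpos (τ u) (hτmem u hu.1 hu.2).1
      linarith
    have l'fu : ∀ u ∈ J, l' u ≤ f u := by
      intro u hu
      rw [lJ u hu]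
      obtain ⟨ht0, ht1⟩ := hτmem u hu.1 hu.2
      have h1 : ψ (τ u) ≤ g (τ u) := hψle _ ht0.le ht1
      have h2 := hgbound u hu.1 hu.2
      have h3 : sSup (f '' Set.Ioo z u) ≤ f u := by
        refine csSup_le ?_ ?_
        · obtain ⟨cc, hc1, hc2⟩ := brto_dense hX hu.1
          exact ⟨f cc, cc, ⟨hc1, hc2⟩, rfl⟩
        · rintro v ⟨w, hw, rfl⟩
          exact (hf hw.2).le
      linarith
    have hτmono : ∀ a b : X, a ∈ J → b ∈ J → a ≤ b → τ a ≤ τ b := by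
      intro a b ha hb hab
      rw [hτval a ha.2, hτval b hb.2]
      have : (e ⟨a, hsub ha.2⟩ : ℝ) ≤ (e ⟨b, hsub hb.2⟩ : ℝ) :=
        Subtype.coe_le_coe.2 (e.le_iff_le.2 (show (⟨a, hsub ha.2⟩ : B) ≤ ⟨b, hsub hb.2⟩ from hab))
      exact (div_le_div_iff_of_pos_right hΔ).2 (by linarith)
    have hτstrict : ∀ a b : X, a ∈ J → b ∈ J → a < b → τ a < τ b := by
      intro a b ha hb hab
      rw [hτval a ha.2, hτval b hb.2]
      have : (e ⟨a, hsub ha.2⟩ : ℝ) < (e ⟨b, hsub hb.2⟩ : ℝ) :=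
        Subtype.coe_lt_coe.2 (e.lt_iff_lt.2 (Subtype.mk_lt_mk.2 hab))
      exact (div_lt_div_iff_of_pos_right hΔ).2 (by linarith)
    have hIVT : ∀ t₁ t₂ c : ℝ, t₁ ≤ t₂ → ψ t₁ ≤ c → c ≤ ψ t₂ → ∃ t, t₁ ≤ t ∧ t ≤ t₂ ∧ ψ t = c := by
      intro t₁ t₂ c h12 hc1 hc2
      have := intermediate_value_Icc h12 hψc.continuousOn (Set.mem_Icc.2 ⟨hc1, hc2⟩)
      obtain ⟨t, ht, hts⟩ := this
      exact ⟨t, ht.1, ht.2, hts⟩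
    have hxJ : x ∈ J := ⟨hzx', le_rfl⟩
    refine ⟨⟨p.dom ∪ J, l', Or.inl p.root_mem, ?_, ?_, ?_, ?_⟩,
      ⟨Set.subset_union_left, fun u hu => (ldom u hu).symm⟩,
      fun hs => d1 x hxJ (hs (Or.inr hxJ))⟩
    · -- downward closed
      intro y v hy hv
      rcases hy with hyd | hyJ
      · exact Or.inl (p.dc hyd hv)
      · rcases Classical.em (v ∈ p.dom) with h | h
        · exact Or.inl h
        · have hvx : v ≤ x := hv.trans hyJ.2
          have hzv : z ≤ v := hlb v hvx h
          have : z < v := lt_of_le_of_ne hzv (fun hh => h (hh ▸ hz))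
          exact Or.inr ⟨this, hvx⟩
    · -- strict monotonicity
      intro a b ha hb hab
      rcases ha with had | haJ <;> rcases hb with hbd | hbJ
      · rw [ldom a had, ldom b hbd]; exact p.mono had hbd hab
      · rw [ldom a had]
        have haz : a ≤ z := hub a had (hab.le.trans hbJ.2)
        have h1 : p.l a ≤ p.l z := by
          rcases eq_or_lt_of_le haz with rfl | hh
          · exact le_rfl
          · exact (p.mono had hz hh).le
        exact lt_of_le_of_lt h1 (lJgt b hbJ)
      · exact absurd (p.dc hbd hab.le) (d1 a haJ)
      · rw [lJ a haJ, lJ b hbJ]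
        have := hψmono (Set.mem_Ici.2 (hτmem a haJ.1 haJ.2).1.le)
          (Set.mem_Ici.2 (hτmem b hbJ.1 hbJ.2).1.le) (hτstrict a b haJ hbJ hab)
        linarith
    · -- surjectivity
      intro a b ha hb hab c h1 h2
      rcases ha with had | haJ
      · rcases hb with hbd | hbJ
        · rw [ldom a had] at h1
          rw [ldom b hbd] at h2
          obtain ⟨u, hu1, hu2, hu3⟩ := p.surj had hbd hab c h1 h2
          exact ⟨u, hu1, hu2, by rw [ldom u (p.dc hbd hu2)]; exact hu3⟩
        · -- a ∈ dom, b ∈ J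
          rw [ldom a had] at h1
          rw [lJ b hbJ] at h2
          have haz : a ≤ z := hub a had (hab.trans hbJ.2)
          rcases le_or_gt c (p.l z) with hc | hc
          · obtain ⟨u, hu1, hu2, hu3⟩ := p.surj had hz haz c h1 hc
            exact ⟨u, hu1, hu2.trans hbJ.1.le, by rw [ldom u (p.dc hz hu2)]; exact hu3⟩
          · obtain ⟨htb0, htb1⟩ := hτmem b hbJ.1 hbJ.2
            obtain ⟨t, ht1, ht2, ht3⟩ := hIVT 0 (τ b) (c - p.l z) htb0.le
              (by rw [hψ0]; linarith) (by linarith)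
            have ht0 : 0 < t := by
              rcases eq_or_lt_of_le ht1 with rfl | hh
              · exfalso; rw [hψ0] at ht3; linarith
              · exact hh
            have htle1 : t ≤ 1 := ht2.trans htb1
            have hu := hPmem t ht0 htle1
            refine ⟨P t, haz.trans (le_of_lt hu.1), ?_, ?_⟩
            · have := hPmono t (τ b) ht0.le ht2 htb1
              rwa [hPτ b hbJ.1 hbJ.2] at this
            · rw [lJ (P t) hu, hτP t ht0 htle1, ht3]
              ring
      · rcases hb with hbd | hbJ
        · exact absurd (p.dc hbd hab) (d1 a haJ)
        · -- both in J
          rw [lJ a haJ] at h1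
          rw [lJ b hbJ] at h2
          obtain ⟨hta0, hta1⟩ := hτmem a haJ.1 haJ.2
          obtain ⟨htb0, htb1⟩ := hτmem b hbJ.1 hbJ.2
          obtain ⟨t, ht1, ht2, ht3⟩ := hIVT (τ a) (τ b) (c - p.l z)
            (hτmono a b haJ hbJ hab) (by linarith) (by linarith)
          have ht0 : 0 < t := hta0.trans_le ht1
          have htle1 : t ≤ 1 := ht2.trans htb1
          have hu := hPmem t ht0 htle1
          refine ⟨P t, ?_, ?_, ?_⟩
          · have := hPmono (τ a) t hta0.le ht1 htle1
            rwa [hPτ a haJ.1 haJ.2] at this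
          · have := hPmono t (τ b) ht0.le ht2 htb1
            rwa [hPτ b hbJ.1 hbJ.2] at this
          · rw [lJ (P t) hu, hτP t ht0 htle1, ht3]
            ring
    · -- bound
      intro y hy w hw
      rcases hy with hyd | hyJ
      · rw [ldom y hyd]; exact p.bdd hyd hw
      · exact lt_of_le_of_lt (l'fu y hyJ) (hf hw)

  · -- Case B : add the single point z
    set L : ℝ := sSup (p.l '' (p.dom ∩ Set.Iio z)) with hLdef
    have hrz : r < z := lt_of_le_of_ne (hr z) (fun h => hz (h ▸ p.root_mem))
    have hne : (p.l '' (p.dom ∩ Set.Iio z)).Nonempty := ⟨p.l r, r, ⟨p.root_mem, hrz⟩, rfl⟩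
    have hbddL : ∀ t ∈ p.l '' (p.dom ∩ Set.Iio z), t ≤ f z := by
      rintro t ⟨v, ⟨hvd, hvz⟩, rfl⟩
      exact (p.bdd hvd hvz).le
    have hLfz : L ≤ f z := csSup_le hne hbddL
    have hlt : ∀ v : X, v ∈ p.dom → v < z → p.l v < L := by
      intro v hvd hvz
      obtain ⟨cc, h1, h2⟩ := brto_dense hX hvz
      have hcx : cc ≤ x := h2.le.trans hzx
      have hcd : cc ∈ p.dom := by
        by_contra hcd
        exact absurd h2 (not_lt_of_ge (hlb cc hcx hcd))
      exact lt_of_lt_of_le (p.mono hvd hcd h1) (le_csSup ⟨f z, hbddL⟩ ⟨cc, ⟨hcd, h2⟩, rfl⟩)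
    refine ⟨⟨insert z p.dom, Function.update p.l z L,
        Set.mem_insert_of_mem _ p.root_mem, ?_, ?_, ?_, ?_⟩,
      ⟨Set.subset_insert _ _, fun u hu =>
        (Function.update_of_ne (ne_of_mem_of_not_mem hu hz) L p.l).symm⟩,
      fun hsub' => hz (hsub' (Set.mem_insert z _))⟩
    · intro y v hy hv
      rcases Set.mem_insert_iff.1 hy with rfl | hyd
      · rcases Classical.em (v ∈ p.dom) with h | h
        · exact Set.mem_insert_of_mem _ h
        · exact Set.mem_insert_iff.2 (Or.inl (le_antisymm hv (hlb v (hv.trans hzx) h)))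
      · exact Set.mem_insert_of_mem _ (p.dc hyd hv)
    · intro a b ha hb hab
      rcases Set.mem_insert_iff.1 ha with rfl | had <;> rcases Set.mem_insert_iff.1 hb with rfl | hbd
      · exact absurd hab (lt_irrefl _)
      · exact absurd (p.dc hbd hab.le) hz
      · rw [Function.update_self, Function.update_of_ne (ne_of_mem_of_not_mem had hz)]
        exact hlt a had hab
      · rw [Function.update_of_ne (ne_of_mem_of_not_mem had hz),
          Function.update_of_ne (ne_of_mem_of_not_mem hbd hz)]
        exact p.mono had hbd hab
    · intro a b ha hb hab k h1 h2
      rcases Set.mem_insert_iff.1 ha with rfl | had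
      · rcases Set.mem_insert_iff.1 hb with rfl | hbd
        · exact ⟨z, le_rfl, le_rfl, le_antisymm h1 h2⟩
        · exact absurd (p.dc hbd hab) hz
      · have hane : a ≠ z := ne_of_mem_of_not_mem had hz
        rcases Set.mem_insert_iff.1 hb with rfl | hbd
        · rw [Function.update_of_ne hane] at h1
          rw [Function.update_self] at h2
          by_cases hkL : k = L
          · exact ⟨z, hab, le_rfl, by rw [Function.update_self, hkL]⟩
          · have hkL' : k < L := lt_of_le_of_ne h2 hkL
            obtain ⟨t, ht, hkt⟩ := exists_lt_of_lt_csSup hne hkL'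
            obtain ⟨v, ⟨hvd, hvz⟩, rfl⟩ := ht
            rcases hdl z a v hab hvz.le with hav | hva
            · obtain ⟨u, hu1, hu2, hu3⟩ := p.surj had hvd hav k h1 hkt.le
              have huz : u < z := lt_of_le_of_lt hu2 hvz
              exact ⟨u, hu1, huz.le, by rw [Function.update_of_ne huz.ne]; exact hu3⟩
            · have : p.l v ≤ p.l a := by
                rcases eq_or_lt_of_le hva with rfl | hh
                · exact le_rfl
                · exact (p.mono hvd had hh).le
              linarith
        · rw [Function.update_of_ne hane] at h1
          rw [Function.update_of_ne (ne_of_mem_of_not_mem hbd hz)] at h2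
          obtain ⟨u, hu1, hu2, hu3⟩ := p.surj had hbd hab k h1 h2
          exact ⟨u, hu1, hu2, by
            rw [Function.update_of_ne (ne_of_mem_of_not_mem (p.dc hbd hu2) hz)]; exact hu3⟩
    · intro y hy w hw
      rcases Set.mem_insert_iff.1 hy with rfl | hyd
      · rw [Function.update_self]
        obtain ⟨cc, h1, h2⟩ := brto_dense hX hw
        exact lt_of_le_of_lt hLfz ((hf h1).trans (hf h2))
      · rw [Function.update_of_ne (ne_of_mem_of_not_mem hyd hz)]
        exact p.bdd hyd hw

end Extend

/-- A branchwise-real tree order admits a continuous grading iff it admits a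
strictly monotonic map into ℝ. -/
theorem brto_continuously_gradable_iff_real_gradable (X : Type*)
    [PartialOrder X] (hX : IsBRTO X) :
    (∃ ℓ : X → ℝ, IsContinuousGrading ℓ) ↔ ∃ f : X → ℝ, StrictMono f := by
  constructor
  · rintro ⟨ℓ, hℓ⟩
    exact ⟨ℓ, hℓ.1⟩
  · rintro ⟨f, hf⟩
    obtain ⟨r, hr⟩ := hX.1
    obtain ⟨M, hM⟩ := zorn_le (pg_chain_bdd hr hf)
    have hMall : ∀ x : X, x ∈ M.dom := by
      intro x
      by_contra hx
      obtain ⟨q, hq1, hq2⟩ := extend_grading hX hf hr M hx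
      exact hq2 (hM hq1).1
    refine ⟨M.l, ?_, ?_⟩
    · intro a b hab
      exact M.mono (hMall a) (hMall b) hab
    · intro a b hab
      refine ⟨?_, ?_, ?_⟩
      · intro u hu
        constructor
        · rcases eq_or_lt_of_le hu.1 with rfl | h
          · exact le_rfl
          · exact (M.mono (hMall a) (hMall u) h).le
        · rcases eq_or_lt_of_le hu.2 with rfl | h
          · exact le_rfl
          · exact (M.mono (hMall u) (hMall b) h).le
      · intro u hu v hv huv
        rcases hX.2.1 b u v hu.2 hv.2 with h | h
        · rcases eq_or_lt_of_le h with rfl | h'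
          · rfl
          · exact absurd huv (ne_of_lt (M.mono (hMall u) (hMall v) h'))
        · rcases eq_or_lt_of_le h with rfl | h'
          · rfl
          · exact absurd huv.symm (ne_of_lt (M.mono (hMall v) (hMall u) h'))
      · intro c hc
        obtain ⟨u, hu1, hu2, hu3⟩ := M.surj (hMall a) (hMall b) hab.le c hc.1 hc.2
        exact ⟨u, ⟨hu1, hu2⟩, hu3⟩
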